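/- arXiv:1802.05200 — 2 statements merged into one kernel-verified Lean document; each statement's English description precedes it below -/
import Mathlib

section
/- For every n ≥ 2, the lazy transposition sequence (1,2,1/2), (2,3,2/3), …, (n-1,n,(n-1)/n), i.e., with i-th entry (i, i+1, i/(i+1)) for 1 ≤ i ≤ n-1, is a sweep of order n. -/
open Finset

/-- The random permutation determined by outcomes `ω`: the composition `s₁ ∘ s₂ ∘ ⋯ ∘ s_ℓ`,
where `sᵢ` is the transposition swapping `a i` and `b i` if `ω i = true` and the identity
otherwise (convention `(σ * τ) x = σ (τ x)`). -/
def lazyPerm {n ℓ : ℕ} (a b : Fin ℓ → Fin n) (ω : Fin ℓ → Bool) : Equiv.Perm (Fin n) :=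
  (List.ofFn fun i => if ω i then Equiv.swap (a i) (b i) else 1).prod

/-- The weight `∏ᵢ pᵢ^{ωᵢ} (1-pᵢ)^{1-ωᵢ}` of an outcome `ω`. -/
def lazyWeight {ℓ : ℕ} (p : Fin ℓ → ℝ) (ω : Fin ℓ → Bool) : ℝ :=
  ∏ i, if ω i then p i else 1 - p i

/-- `(aᵢ, bᵢ, pᵢ)ᵢ` is a transposition shuffle of order `n`: a lazy transposition sequence
(`aᵢ ≠ bᵢ`, `pᵢ ∈ [0,1]`) such that the induced distribution on `Sₙ` is uniform. -/
def IsTranspositionShuffle (n ℓ : ℕ) (a b : Fin ℓ → Fin n) (p : Fin ℓ → ℝ) : Prop :=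
  (∀ i, a i ≠ b i) ∧ (∀ i, 0 ≤ p i ∧ p i ≤ 1) ∧
    ∀ α : Equiv.Perm (Fin n),
      ∑ ω ∈ univ.filter fun ω : Fin ℓ → Bool => lazyPerm a b ω = α,
        lazyWeight p ω = 1 / (n.factorial : ℝ)


/-- `(aᵢ, bᵢ, pᵢ)ᵢ` is a sweep of order `n`: a lazy transposition sequence such that the
last entry `π(ω)(n)` of the resulting permutation is uniform on `{1,…,n}`
(positions are `0`-based: the last position is `⟨n-1, _⟩`). -/
def IsSweep (n ℓ : ℕ) (hn : 0 < n) (a b : Fin ℓ → Fin n) (p : Fin ℓ → ℝ) : Prop :=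
  (∀ i, a i ≠ b i) ∧ (∀ i, 0 ≤ p i ∧ p i ≤ 1) ∧
    ∀ j : Fin n,
      ∑ ω ∈ univ.filter fun ω : Fin ℓ → Bool =>
          lazyPerm a b ω ⟨n - 1, Nat.sub_lt hn Nat.one_pos⟩ = j,
        lazyWeight p ω = 1 / (n : ℝ)

def posAux : (m : ℕ) → (Fin m → Bool) → ℕ
  | 0, _ => 0
  | m+1, ω => if ω (Fin.last m) then posAux m (fun i => ω i.castSucc) else m+1

lemma posAux_succ (m : ℕ) (ω : Fin (m+1) → Bool) :
    posAux (m+1) ω = if ω (Fin.last m) then posAux m (fun i => ω i.castSucc) else m+1 := rfl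

lemma posAux_le : ∀ (m : ℕ) (ω : Fin m → Bool), posAux m ω ≤ m
  | 0, _ => le_refl 0
  | m+1, ω => by
    rw [posAux_succ]
    split
    · exact (posAux_le m _).trans (Nat.le_succ m)
    · exact le_refl _

lemma prod_fix {n : ℕ} (l : List (Equiv.Perm (Fin n))) (x : Fin n)
    (h : ∀ g ∈ l, g x = x) : l.prod x = x := by
  induction l with
  | nil => simp
  | cons g l ih =>
    rw [List.prod_cons, Equiv.Perm.mul_apply,
      ih (fun g hg => h g (List.mem_cons_of_mem _ hg)), h g List.mem_cons_self]

lemma key (n : ℕ) : ∀ (m : ℕ) (h : m < n) (ω : Fin m → Bool),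
    (((List.ofFn fun i : Fin m =>
        if ω i then Equiv.swap (⟨i.1, by omega⟩ : Fin n) ⟨i.1 + 1, by omega⟩ else 1).prod)
      ⟨m, h⟩).val = posAux m ω
  | 0, h, ω => by simp [posAux]
  | m+1, h, ω => by
    rw [List.ofFn_succ', List.prod_concat, Equiv.Perm.mul_apply, posAux_succ]
    by_cases hb : ω (Fin.last m)
    · rw [if_pos hb, if_pos hb]
      have hpt : Equiv.swap (⟨(Fin.last m).1, by omega⟩ : Fin n) ⟨(Fin.last m).1 + 1, by omega⟩
          ⟨m + 1, h⟩ = ⟨m, by omega⟩ := by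
        have h2 : (⟨m + 1, h⟩ : Fin n) = ⟨(Fin.last m).1 + 1, by simp; omega⟩ := rfl
        rw [h2, Equiv.swap_apply_right]
        rfl
      rw [hpt]
      exact key n m (by omega) (fun i => ω i.castSucc)
    · rw [if_neg hb, if_neg hb, Equiv.Perm.one_apply]
      have : (List.ofFn fun i : Fin m =>
          if ω i.castSucc then Equiv.swap (⟨(i.castSucc).1, by have := i.isLt; omega⟩ : Fin n)
            ⟨(i.castSucc).1 + 1, by have := i.isLt; omega⟩ else 1).prod ⟨m+1, h⟩ = ⟨m+1, h⟩ := by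
        apply prod_fix
        intro g hg
        rw [List.mem_ofFn] at hg
        obtain ⟨i, rfl⟩ := hg
        by_cases hi : ω i.castSucc
        · simp only [hi, if_true]
          apply Equiv.swap_apply_of_ne_of_ne
          · exact Fin.ne_of_val_ne (by have := i.isLt; simp; omega)
          · exact Fin.ne_of_val_ne (by have := i.isLt; simp; omega)
        · simp [hi]
      rw [this]

lemma weight_snoc (m : ℕ) (p : Fin (m+1) → ℝ) (ω' : Fin m → Bool) (b : Bool) :
    lazyWeight p (Fin.snoc ω' b) =
      lazyWeight (fun i => p i.castSucc) ω' *
        (if b then p (Fin.last m) else 1 - p (Fin.last m)) := by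
  unfold lazyWeight
  rw [Fin.prod_univ_castSucc]
  simp only [Fin.snoc_castSucc, Fin.snoc_last]

lemma pos_snoc (m : ℕ) (ω' : Fin m → Bool) (b : Bool) :
    posAux (m+1) (Fin.snoc ω' b) = if b then posAux m ω' else m+1 := by
  rw [posAux_succ]
  have h1 : (fun i : Fin m => (Fin.snoc ω' b : Fin (m+1) → Bool) i.castSucc) = ω' :=
    funext fun i => Fin.snoc_castSucc ..
  rw [Fin.snoc_last, h1]

lemma total : ∀ (m : ℕ) (p : Fin m → ℝ), ∑ ω : Fin m → Bool, lazyWeight p ω = 1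
  | 0, p => by simp [lazyWeight]
  | m+1, p => by
    rw [← Equiv.sum_comp (Fin.snocEquiv (fun _ => Bool)), Fintype.sum_prod_type]
    simp only [show ∀ (a : Bool) (ω' : Fin m → Bool),
        (Fin.snocEquiv (fun _ => Bool)) (a, ω') = Fin.snoc ω' a from fun _ _ => rfl]
    have hw : ∀ (b : Bool) (ω' : Fin m → Bool),
        lazyWeight p (Fin.snoc ω' b) =
          lazyWeight (fun i => p i.castSucc) ω' *
            (if b then p (Fin.last m) else 1 - p (Fin.last m)) := by
      intro b ω'; exact weight_snoc m p ω' b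
    simp only [hw]
    rw [Fintype.sum_bool]
    simp only [← Finset.sum_mul, total m (fun i => p i.castSucc)]
    simp only [reduceIte, Bool.false_eq_true, if_false, if_true]
    ring

lemma Tlem : ∀ (m : ℕ) (j : ℕ), j ≤ m →
    ∑ ω ∈ univ.filter (fun ω : Fin m → Bool => posAux m ω = j),
      lazyWeight (fun i : Fin m => ((i:ℕ)+1:ℝ)/((i:ℕ)+2)) ω = 1/((m:ℝ)+1)
  | 0, j, hj => by
    interval_cases j
    have he : (univ.filter (fun ω : Fin 0 → Bool => posAux 0 ω = 0)) = univ :=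
      Finset.filter_true_of_mem (fun _ _ => rfl)
    rw [he]
    simp [lazyWeight]
  | m+1, j, hj => by
    rw [Finset.sum_filter, ← Equiv.sum_comp (Fin.snocEquiv (fun _ => Bool)),
      Fintype.sum_prod_type]
    simp only [show ∀ (a : Bool) (ω' : Fin m → Bool),
        (Fin.snocEquiv (fun _ => Bool)) (a, ω') = Fin.snoc ω' a from fun _ _ => rfl]
    have hw : ∀ (b : Bool) (ω' : Fin m → Bool),
        lazyWeight (fun i : Fin (m+1) => ((i:ℕ)+1:ℝ)/((i:ℕ)+2)) (Fin.snoc ω' b) =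
          lazyWeight (fun i : Fin m => ((i:ℕ)+1:ℝ)/((i:ℕ)+2)) ω' *
            (if b then ((m:ℝ)+1)/((m:ℝ)+2) else 1 - ((m:ℝ)+1)/((m:ℝ)+2)) := by
      intro b ω'
      rw [weight_snoc m _ ω' b]
      simp [Fin.val_last]
    have hp : ∀ (b : Bool) (ω' : Fin m → Bool),
        posAux (m+1) (Fin.snoc ω' b) = if b then posAux m ω' else m+1 := by
      intro b ω'; exact pos_snoc m ω' b
    simp only [hw, hp]
    rw [Fintype.sum_bool]
    simp only [reduceIte, Bool.false_eq_true, if_false, if_true]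
    have hm2 : ((m:ℝ)+2) ≠ 0 := by positivity
    have hm1 : ((m:ℝ)+1) ≠ 0 := by positivity
    rcases Nat.lt_or_ge j (m+1) with hj' | hj'
    · have hne : m + 1 ≠ j := by omega
      simp only [hne, if_false]
      have hfac : ∀ ω' : Fin m → Bool,
          (if posAux m ω' = j then
              lazyWeight (fun i : Fin m => ((i:ℕ)+1:ℝ)/((i:ℕ)+2)) ω' * (((m:ℝ)+1)/((m:ℝ)+2))
            else 0) =
          (if posAux m ω' = j then lazyWeight (fun i : Fin m => ((i:ℕ)+1:ℝ)/((i:ℕ)+2)) ω'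
            else 0) * (((m:ℝ)+1)/((m:ℝ)+2)) := by
        intro ω'; split <;> simp
      simp only [hfac]
      rw [← Finset.sum_mul, ← Finset.sum_filter, Tlem m j (by omega)]
      push_cast
      field_simp
      simp only [Finset.sum_const_zero]
      ring
    · have hje : j = m + 1 := by omega
      subst hje
      have hne : ∀ ω' : Fin m → Bool, ¬ (posAux m ω' = m + 1) := by
        intro ω' h; have := posAux_le m ω'; omega
      simp only [hne, if_false, if_true, Finset.sum_const_zero, zero_add]
      rw [← Finset.sum_mul, total m]
      push_cast
      field_simp
      ring


/-- for `n ≥ 2`, the lazy transposition sequence with `i`-th entry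
`(i, i+1, i/(i+1))` for `1 ≤ i ≤ n-1` (here `0`-based: `j`-th entry
`(j, j+1, (j+1)/(j+2))` for `0 ≤ j ≤ n-2`) is a sweep of order `n`. -/
theorem adjacent_sweep (n : ℕ) (hn : 2 ≤ n) :
    IsSweep n (n - 1) (by omega)
      (fun j => ⟨(j : ℕ), by have := j.isLt; omega⟩)
      (fun j => ⟨(j : ℕ) + 1, by have := j.isLt; omega⟩)
      (fun j => ((j : ℕ) + 1 : ℝ) / ((j : ℕ) + 2 : ℝ)) := by
  refine ⟨fun i => ?_, fun i => ⟨by positivity, ?_⟩, ?_⟩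
  · show (⟨(i:ℕ), _⟩ : Fin n) ≠ ⟨(i:ℕ)+1, _⟩
    exact Fin.ne_of_val_ne (by simp)
  · rw [div_le_one (by positivity)]; linarith
  · intro j
    have hm : n - 1 < n := by omega
    have hperm : ∀ ω : Fin (n-1) → Bool,
        (lazyPerm (fun j : Fin (n-1) => (⟨(j:ℕ), by have := j.isLt; omega⟩ : Fin n))
          (fun j : Fin (n-1) => (⟨(j:ℕ)+1, by have := j.isLt; omega⟩ : Fin n)) ω
          ⟨n-1, Nat.sub_lt (by omega) Nat.one_pos⟩).val = posAux (n-1) ω :=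
      fun ω => key n (n-1) hm ω
    have hfil : (univ.filter fun ω : Fin (n-1) → Bool =>
          lazyPerm (fun j : Fin (n-1) => (⟨(j:ℕ), by have := j.isLt; omega⟩ : Fin n))
            (fun j : Fin (n-1) => (⟨(j:ℕ)+1, by have := j.isLt; omega⟩ : Fin n)) ω
            ⟨n-1, Nat.sub_lt (by omega) Nat.one_pos⟩ = j)
        = univ.filter (fun ω : Fin (n-1) → Bool => posAux (n-1) ω = j.val) := by
      apply Finset.filter_congr
      intro ω _
      rw [← hperm ω]
      exact Fin.ext_iff
    rw [hfil, Tlem (n-1) j.val (by have := j.isLt; omega)]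
    congr 1
    have h : (n - 1) + 1 = n := by omega
    calc ((n-1:ℕ):ℝ) + 1 = ((n-1+1 : ℕ):ℝ) := by push_cast; ring
      _ = (n:ℝ) := by rw [h]
end

section
/- For n ≥ 3, there is no transposition shuffle (a_i, b_i, p_i)_{i=1}^ℓ of order n with p_i = 1/2 for all i. -/
open Finset

/-- for `n ≥ 3`, no transposition shuffle of order `n` has all its
probabilities equal to `1/2`. -/
theorem no_all_half_shuffle (n ℓ : ℕ) (hn : 3 ≤ n)
    (a b : Fin ℓ → Fin n) (p : Fin ℓ → ℝ)
    (h : IsTranspositionShuffle n ℓ a b p) :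
    ¬ ∀ i, p i = 1 / 2 := by
  intro hp
  have hw : ∀ ω : Fin ℓ → Bool, lazyWeight p ω = (1/2 : ℝ) ^ ℓ := by
    intro ω
    unfold lazyWeight
    rw [show ((1:ℝ)/2)^ℓ = ∏ _i : Fin ℓ, (1/2 : ℝ) by simp]
    refine Finset.prod_congr rfl fun i _ => ?_
    rw [hp i]; split <;> norm_num
  have key := h.2.2 1
  rw [Finset.sum_congr rfl (fun ω _ => hw ω), Finset.sum_const, nsmul_eq_mul] at key
  set c := (Finset.univ.filter fun ω : Fin ℓ → Bool => lazyPerm a b ω = 1).card with hc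
  have h2 : (c : ℝ) * n.factorial = 2 ^ ℓ := by
    have hfac : (0:ℝ) < n.factorial := by positivity
    have h2l : (0:ℝ) < 2 ^ ℓ := by positivity
    field_simp at key
    have h12 : (1/2:ℝ)^ℓ * 2^ℓ = 1 := by rw [← mul_pow]; norm_num
    linear_combination (2:ℝ)^ℓ * key - ((c:ℝ) * n.factorial) * h12
  have hnat : c * n.factorial = 2 ^ ℓ := by exact_mod_cast h2
  have h3 : 3 ∣ 2 ^ ℓ := by
    rw [← hnat]
    exact Dvd.dvd.mul_left (Nat.dvd_factorial (by norm_num) hn) c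
  have := Nat.Prime.dvd_of_dvd_pow (p := 3) (by norm_num) h3
  norm_num at this
end
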